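/- Let X ~ Bernoulli(p) with p ∈ [1/2, 1) and P_{Y|X} = BIBO(α,β) with α, β ∈ [0, 1/2) such that (1−α)(1−p) > βp. Then nontrivial utility under perfect privacy holds, i.e., h(P_c(X)) = h(p) > P_c(Y) = max{q, 1−q} where q := α(1−p) + (1−β)p, if and only if α(1−α)(1−p)² < β(1−β)p² and p ∈ (1/2, 1). -/

import Mathlib

open Finset

set_option maxHeartbeats 4000000


/-- Privacy `𝒫(F) = P_c(X|Z)` of a `2×3` filter, for a joint pmf `P` on `{0,1}²`. -/
noncomputable def privF2 (P : Fin 2 → Fin 2 → ℝ) (F : Fin 2 → Fin 3 → ℝ) : ℝ :=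
  ∑ z, ⨆ x, ∑ y, P x y * F y z

/-- Utility `𝒰(F) = P_c(Y|Z)` of a `2×3` filter. -/
noncomputable def utilF2 (P : Fin 2 → Fin 2 → ℝ) (F : Fin 2 → Fin 3 → ℝ) : ℝ :=
  ∑ z, ⨆ y, (∑ x, P x y) * F y z

/-- `F ∈ ℱ`: `F` is a row-stochastic `2×3` matrix. -/
def IsFilter2 (F : Fin 2 → Fin 3 → ℝ) : Prop :=
  (∀ y z, 0 ≤ F y z) ∧ ∀ y, ∑ z, F y z = 1

/-- The privacy-constrained guessing function `h(ε)` in the binary case. -/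
noncomputable def hFun2 (P : Fin 2 → Fin 2 → ℝ) (ε : ℝ) : ℝ :=
  sSup {u | ∃ F, IsFilter2 F ∧ privF2 P F ≤ ε ∧ u = utilF2 P F}

lemma ciSup_fin2 (f : Fin 2 → ℝ) : (⨆ x, f x) = max (f 0) (f 1) := by
  apply le_antisymm
  · refine ciSup_le fun i => ?_
    fin_cases i
    · exact le_max_left _ _
    · exact le_max_right _ _
  · exact max_le (le_ciSup (Set.finite_range f).bddAbove 0)
      (le_ciSup (Set.finite_range f).bddAbove 1)

lemma privF2_eq (P : Fin 2 → Fin 2 → ℝ) (F : Fin 2 → Fin 3 → ℝ) :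
    privF2 P F = ∑ z, max (P 0 0 * F 0 z + P 0 1 * F 1 z) (P 1 0 * F 0 z + P 1 1 * F 1 z) := by
  unfold privF2
  refine Finset.sum_congr rfl fun z _ => ?_
  rw [ciSup_fin2 (fun x => ∑ y, P x y * F y z)]
  simp [Fin.sum_univ_two]

lemma utilF2_eq (P : Fin 2 → Fin 2 → ℝ) (F : Fin 2 → Fin 3 → ℝ) :
    utilF2 P F = ∑ z, max ((P 0 0 + P 1 0) * F 0 z) ((P 0 1 + P 1 1) * F 1 z) := by
  unfold utilF2
  refine Finset.sum_congr rfl fun z _ => ?_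
  rw [ciSup_fin2 (fun y => (∑ x, P x y) * F y z)]
  simp [Fin.sum_univ_two]

/-- nontrivial utility under perfect privacy, `h(P_c(X)) > P_c(Y)`,
holds if and only if `α(1−α)(1−p)² < β(1−β)p²` and `p ∈ (1/2, 1)`, where
`P_c(Y) = max{q, 1−q}` with `q = α(1−p) + (1−β)p`. -/
theorem perfect_privacy_nontrivial_utility_iff (p α β : ℝ)
    (hp : p ∈ Set.Ico (1 / 2 : ℝ) 1)
    (hα : α ∈ Set.Ico (0 : ℝ) (1 / 2))
    (hβ : β ∈ Set.Ico (0 : ℝ) (1 / 2))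
    (hnt : β * p < (1 - α) * (1 - p))
    (P : Fin 2 → Fin 2 → ℝ)
    (h00 : P 0 0 = (1 - p) * (1 - α)) (h01 : P 0 1 = (1 - p) * α)
    (h10 : P 1 0 = p * β) (h11 : P 1 1 = p * (1 - β)) :
    max (α * (1 - p) + (1 - β) * p) (1 - (α * (1 - p) + (1 - β) * p)) < hFun2 P p ↔
      (α * (1 - α) * (1 - p) ^ 2 < β * (1 - β) * p ^ 2 ∧ 1 / 2 < p) := by
  obtain ⟨hp1, hp2⟩ := hp
  obtain ⟨hα0, hα1⟩ := hα
  obtain ⟨hβ0, hβ1⟩ := hβ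
  obtain ⟨q, hqdef⟩ : ∃ x : ℝ, x = α * (1 - p) + (1 - β) * p := ⟨_, rfl⟩
  obtain ⟨A, hAdef⟩ : ∃ x : ℝ, x = (1 - p) * (1 - α) - p * β := ⟨_, rfl⟩
  obtain ⟨B, hBdef⟩ : ∃ x : ℝ, x = p * (1 - β) - (1 - p) * α := ⟨_, rfl⟩
  rw [← hqdef]
  have hA : 0 < A := by
    rw [hAdef]
    linarith [hnt, mul_comm (1 - p) (1 - α), mul_comm p β]
  have hB : 0 < B := by
    rw [hBdef]
    linarith [mul_nonneg (by linarith : (0:ℝ) ≤ p - 1/2) (by linarith : (0:ℝ) ≤ 1 - β),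
      mul_nonneg (by linarith : (0:ℝ) ≤ p - 1/2) hα0]
  have hq0 : 0 < q := by
    rw [hqdef]
    linarith [mul_pos (by linarith : (0:ℝ) < 1 - β) (by linarith : (0:ℝ) < p),
      mul_nonneg hα0 (by linarith : (0:ℝ) ≤ 1 - p)]
  have hq1 : q < 1 := by
    rw [hqdef]
    linarith [mul_pos (by linarith : (0:ℝ) < 1 - α) (by linarith : (0:ℝ) < 1 - p),
      mul_nonneg hβ0 (by linarith : (0:ℝ) ≤ p)]
  have hkey : (1 - q) * B - q * A = 2 * (β * (1 - β) * p ^ 2 - α * (1 - α) * (1 - p) ^ 2) := by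
    rw [hqdef, hAdef, hBdef]; ring
  have hBA : B - A = 2 * p - 1 := by rw [hAdef, hBdef]; ring
  have hPy0 : P 0 0 + P 1 0 = 1 - q := by rw [h00, h10, hqdef]; ring
  have hPy1 : P 0 1 + P 1 1 = q := by rw [h01, h11, hqdef]; ring
  set S := {u | ∃ F, IsFilter2 F ∧ privF2 P F ≤ p ∧ u = utilF2 P F} with hSdef
  have hH : hFun2 P p = sSup S := rfl
  -- S is bounded above by 1
  have hub : ∀ u ∈ S, u ≤ (1 : ℝ) := by
    rintro u ⟨F, ⟨hFnn, hFrow⟩, -, rfl⟩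
    rw [utilF2_eq, hPy0, hPy1]
    calc ∑ z, max ((1 - q) * F 0 z) (q * F 1 z)
        ≤ ∑ z, ((1 - q) * F 0 z + q * F 1 z) := by
          refine Finset.sum_le_sum fun z _ => ?_
          refine max_le ?_ ?_
          · linarith [mul_nonneg hq0.le (hFnn 1 z)]
          · linarith [mul_nonneg (by linarith : (0:ℝ) ≤ 1 - q) (hFnn 0 z)]
      _ = 1 := by
          rw [Finset.sum_add_distrib, ← Finset.mul_sum, ← Finset.mul_sum, hFrow 0, hFrow 1]
          ring
  have hbdd : BddAbove S := ⟨1, hub⟩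
  -- S is nonempty
  have hne : S.Nonempty := by
    refine ⟨utilF2 P (fun _ => ![1, 0, 0]), fun _ => ![1, 0, 0], ⟨?_, ?_⟩, ?_, rfl⟩
    · intro y z; fin_cases z <;> norm_num
    · intro y; simp [Fin.sum_univ_three]
    · rw [privF2_eq, Fin.sum_univ_three]
      simp only [Matrix.cons_val_zero, Matrix.cons_val_one, Matrix.head_cons]
      norm_num
      simp only [show (![1, 0, 0] : Fin 3 → ℝ) 2 = 0 from rfl, mul_zero, add_zero, max_self, max_le_iff]
      constructor <;> linarith
  -- perfect privacy constraint
  have hconstraint : ∀ F : Fin 2 → Fin 3 → ℝ, IsFilter2 F → privF2 P F ≤ p →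
      ∀ z, A * F 0 z ≤ B * F 1 z := by
    rintro F ⟨hFnn, hFrow⟩ hpriv z
    have hsum : ∑ w, (P 1 0 * F 0 w + P 1 1 * F 1 w) = p := by
      rw [Finset.sum_add_distrib, ← Finset.mul_sum, ← Finset.mul_sum, hFrow 0, hFrow 1,
        h10, h11]
      ring
    have h1 : ∑ w, (max (P 0 0 * F 0 w + P 0 1 * F 1 w) (P 1 0 * F 0 w + P 1 1 * F 1 w)
        - (P 1 0 * F 0 w + P 1 1 * F 1 w)) ≤ 0 := by
      rw [Finset.sum_sub_distrib, hsum, ← privF2_eq]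
      linarith
    have h2 : max (P 0 0 * F 0 z + P 0 1 * F 1 z) (P 1 0 * F 0 z + P 1 1 * F 1 z)
        - (P 1 0 * F 0 z + P 1 1 * F 1 z) ≤ 0 := by
      refine le_trans (Finset.single_le_sum (f := fun w =>
        max (P 0 0 * F 0 w + P 0 1 * F 1 w) (P 1 0 * F 0 w + P 1 1 * F 1 w)
          - (P 1 0 * F 0 w + P 1 1 * F 1 w)) (fun w _ => ?_) (Finset.mem_univ z)) h1
      show (0:ℝ) ≤ max (P 0 0 * F 0 w + P 0 1 * F 1 w) (P 1 0 * F 0 w + P 1 1 * F 1 w)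
          - (P 1 0 * F 0 w + P 1 1 * F 1 w)
      have := le_max_right (P 0 0 * F 0 w + P 0 1 * F 1 w) (P 1 0 * F 0 w + P 1 1 * F 1 w)
      linarith
    have h3 : P 0 0 * F 0 z + P 0 1 * F 1 z ≤ P 1 0 * F 0 z + P 1 1 * F 1 z := by
      have := le_max_left (P 0 0 * F 0 z + P 0 1 * F 1 z) (P 1 0 * F 0 z + P 1 1 * F 1 z)
      linarith
    rw [h00, h01, h10, h11] at h3
    rw [hAdef, hBdef]
    ring_nf
    ring_nf at h3
    linarith
  -- if the condition fails, every element of S is at most max q (1-q)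
  have hbound : ¬ (α * (1 - α) * (1 - p) ^ 2 < β * (1 - β) * p ^ 2 ∧ 1 / 2 < p) →
      ∀ u ∈ S, u ≤ max q (1 - q) := by
    intro hc u hu
    obtain ⟨F, hF, hpriv, rfl⟩ := hu
    have hcz := hconstraint F hF hpriv
    obtain ⟨hFnn, hFrow⟩ := hF
    rw [utilF2_eq, hPy0, hPy1]
    by_cases hpc : 1 / 2 < p
    · have hc1 : β * (1 - β) * p ^ 2 ≤ α * (1 - α) * (1 - p) ^ 2 := by
        by_contra hx
        push_neg at hx
        exact hc ⟨hx, hpc⟩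
      have hqAB : (1 - q) * B ≤ q * A := by linarith
      have hle : ∀ z, (1 - q) * F 0 z ≤ q * F 1 z := by
        intro z
        have h1 := hcz z
        have h2 : (1 - q) * (A * F 0 z) ≤ (1 - q) * (B * F 1 z) :=
          mul_le_mul_of_nonneg_left h1 (by linarith)
        have h3 : (1 - q) * B * F 1 z ≤ q * A * F 1 z :=
          mul_le_mul_of_nonneg_right hqAB (hFnn 1 z)
        have h4 : A * ((1 - q) * F 0 z) ≤ A * (q * F 1 z) := by linarith [h2, h3]
        exact le_of_mul_le_mul_left h4 hA
      calc ∑ z, max ((1 - q) * F 0 z) (q * F 1 z) = ∑ z, q * F 1 z :=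
            Finset.sum_congr rfl fun z _ => max_eq_right (hle z)
        _ = q := by rw [← Finset.mul_sum, hFrow 1, mul_one]
        _ ≤ max q (1 - q) := le_max_left _ _
    · have hp12 : p = 1 / 2 := le_antisymm (not_lt.1 hpc) hp1
      have hABeq : A = B := by rw [hAdef, hBdef, hp12]; ring
      have hFle : ∀ z, F 0 z ≤ F 1 z := by
        intro z
        have h1 := hcz z
        rw [hABeq] at h1
        exact le_of_mul_le_mul_left h1 (hABeq ▸ hA)
      have hFeq : ∀ z : Fin 3, F 1 z - F 0 z = 0 := by
        have hs : ∑ z, (F 1 z - F 0 z) = 0 := by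
          rw [Finset.sum_sub_distrib, hFrow 1, hFrow 0]; ring
        intro z
        exact (Finset.sum_eq_zero_iff_of_nonneg
          (fun w _ => by linarith [hFle w])).1 hs z (Finset.mem_univ z)
      calc ∑ z, max ((1 - q) * F 0 z) (q * F 1 z)
          ≤ ∑ z, max q (1 - q) * F 0 z := by
            refine Finset.sum_le_sum fun z _ => ?_
            have hz := hFeq z
            refine max_le ?_ ?_
            · exact mul_le_mul_of_nonneg_right (le_max_right _ _) (hFnn 0 z)
            · have : q * F 1 z = q * F 0 z := by rw [show F 1 z = F 0 z by linarith]
              rw [this]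
              exact mul_le_mul_of_nonneg_right (le_max_left _ _) (hFnn 0 z)
        _ = max q (1 - q) := by rw [← Finset.mul_sum, hFrow 0, mul_one]
  constructor
  · intro h
    by_contra hc
    have hle : hFun2 P p ≤ max q (1 - q) := by
      rw [hH]
      exact csSup_le hne (hbound hc)
    exact absurd h (not_lt.2 hle)
  · rintro ⟨hc1, hc2⟩
    have hcond : q * A < (1 - q) * B := by linarith
    have hAB : A < B := by linarith
    obtain ⟨c, hcdef⟩ : ∃ x : ℝ, x = A / B := ⟨_, rfl⟩
    have hc0 : 0 ≤ c := hcdef ▸ div_nonneg hA.le hB.le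
    have hclt : c < 1 := hcdef ▸ (div_lt_one hB).2 hAB
    have hBc : c * B = A := by rw [hcdef]; field_simp
    set F : Fin 2 → Fin 3 → ℝ := ![![1, 0, 0], ![c, 1 - c, 0]] with hFdef
    have hF00 : F 0 0 = 1 := rfl
    have hF01 : F 0 1 = 0 := rfl
    have hF02 : F 0 2 = 0 := rfl
    have hF10 : F 1 0 = c := rfl
    have hF11 : F 1 1 = 1 - c := rfl
    have hF12 : F 1 2 = 0 := rfl
    have hfilter : IsFilter2 F := by
      constructor
      · intro y z
        fin_cases y <;> fin_cases z <;>
          simp [hFdef] <;> linarith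
      · intro y
        fin_cases y <;> simp [Fin.sum_univ_three, hFdef]
    have hprivle : privF2 P F ≤ p := by
      rw [privF2_eq, Fin.sum_univ_three, hF00, hF01, hF02, hF10, hF11, hF12]
      have e1 : P 0 0 * 1 + P 0 1 * c = P 1 0 * 1 + P 1 1 * c := by
        rw [h00, h01, h10, h11]
        have h6 := hBc
        rw [hAdef, hBdef] at h6
        linear_combination -h6
      have e2 : P 0 1 ≤ P 1 1 := by
        rw [h01, h11]
        have h6 := hB
        rw [hBdef] at h6
        linarith
      have e2' : P 0 0 * 0 + P 0 1 * (1 - c) ≤ P 1 0 * 0 + P 1 1 * (1 - c) := by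
        linarith [mul_le_mul_of_nonneg_right e2 (by linarith : (0:ℝ) ≤ 1 - c)]
      have e3 : max (P 0 0 * 0 + P 0 1 * 0) (P 1 0 * 0 + P 1 1 * 0) = (0:ℝ) := by norm_num
      rw [e1, max_self, max_eq_right e2', e3, h10, h11]
      have efin : p * β * 1 + p * (1 - β) * c + (p * β * 0 + p * (1 - β) * (1 - c)) + 0 = p := by
        ring
      linarith
    have hutil : utilF2 P F = (1 - q) + q * (1 - c) := by
      rw [utilF2_eq, hPy0, hPy1, Fin.sum_univ_three, hF00, hF01, hF02, hF10, hF11, hF12]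
      have hqc : q * c ≤ (1 - q) * 1 := by
        rw [mul_one]
        have h5 : q * c * B = q * A := by rw [mul_assoc, hBc]
        have h6 : q * c * B < (1 - q) * B := by linarith
        exact (lt_of_mul_lt_mul_right h6 hB.le).le
      rw [max_eq_left hqc]
      rw [max_eq_right (by simpa using mul_nonneg hq0.le (by linarith : (0:ℝ) ≤ 1 - c) :
        (1 - q) * 0 ≤ q * (1 - c))]
      rw [max_eq_right (by norm_num : ((1:ℝ) - q) * 0 ≤ q * 0)]
      ring
    have hmem : (1 - q) + q * (1 - c) ∈ S := ⟨F, hfilter, hprivle, hutil.symm⟩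
    have hlt : max q (1 - q) < (1 - q) + q * (1 - c) := by
      refine max_lt ?_ ?_
      · have h5 : q * c * B = q * A := by rw [mul_assoc, hBc]
        have h6 : q * c * B < (1 - q) * B := by linarith
        have h7 : q * c < 1 - q := lt_of_mul_lt_mul_right h6 hB.le
        linarith
      · linarith [mul_pos hq0 (by linarith : (0:ℝ) < 1 - c)]
    rw [hH]
    exact lt_csSup_of_lt hbdd hmem hlt
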